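/- For any n-dimensional hypercube-like graph G_n ∈ HL_n and any vertex subset X with |X| = g = Σ_{i=0}^{s} 2^{t_i} (binary expansion), the number of edges of the induced subgraph G_n[X] is at most Σ_{i=0}^{s} t_i·2^{t_i−1} + Σ_{i=0}^{s} i·2^{t_i}, and this bound is attained by some X. -/

import Mathlib

/-- The strictly decreasing list of exponents `t_0 > t_1 > ⋯ > t_s` in the
binary expansion `g = Σ_{i=0}^{s} 2^(t_i)` of `g`. -/
def expList (g : ℕ) : List ℕ :=
  (((Finset.range (g + 1)).filter (fun k => g.testBit k)).sort (· ≤ ·)).reverse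

/-- `e g = Σ_{i=0}^{s} t_i·2^(t_i−1) + Σ_{i=0}^{s} i·2^(t_i)` over the binary
expansion `g = Σ_{i=0}^{s} 2^(t_i)` with `t_0 > t_1 > ⋯ > t_s ≥ 0` (and `e 0 = 0`). -/
def eHL (g : ℕ) : ℕ :=
  ((expList g).zipIdx.map (fun p => p.1 * 2 ^ (p.1 - 1) + p.2 * 2 ^ p.1)).sum

/-- Vertex type of `n`-dimensional HL-networks: `2^n` vertices. -/
def HLV : ℕ → Type
  | 0 => Unit
  | n + 1 => Bool × HLV n

instance HLV.fintype : ∀ n, Fintype (HLV n)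
  | 0 => inferInstanceAs (Fintype Unit)
  | n + 1 => letI := HLV.fintype n; inferInstanceAs (Fintype (Bool × HLV n))

/-- Join two graphs on the same vertex type by a perfect matching given by a
bijection `f`: the result lives on `Bool × V`, with the copy `false` carrying `G`,
the copy `true` carrying `G'`, and matching edges between `(false, v)` and `(true, f v)`. -/
def matchingJoin {V : Type} (G G' : SimpleGraph V) (f : V ≃ V) :
    SimpleGraph (Bool × V) where
  Adj x y :=
    (x.1 = false ∧ y.1 = false ∧ G.Adj x.2 y.2) ∨
    (x.1 = true ∧ y.1 = true ∧ G'.Adj x.2 y.2) ∨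
    (x.1 = false ∧ y.1 = true ∧ y.2 = f x.2) ∨
    (x.1 = true ∧ y.1 = false ∧ x.2 = f y.2)
  symm := by
    refine ⟨?_⟩
    rintro ⟨a, u⟩ ⟨b, v⟩ h
    dsimp at h ⊢
    rcases h with ⟨h1, h2, h3⟩ | ⟨h1, h2, h3⟩ | ⟨h1, h2, h3⟩ | ⟨h1, h2, h3⟩
    · exact Or.inl ⟨h2, h1, h3.symm⟩
    · exact Or.inr (Or.inl ⟨h2, h1, h3.symm⟩)
    · exact Or.inr (Or.inr (Or.inr ⟨h2, h1, h3⟩))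
    · exact Or.inr (Or.inr (Or.inl ⟨h2, h1, h3⟩))
  loopless := by
    refine ⟨?_⟩
    rintro ⟨a, u⟩ h
    dsimp at h
    rcases h with ⟨_, _, h3⟩ | ⟨_, _, h3⟩ | ⟨h1, h2, _⟩ | ⟨h1, h2, _⟩
    · exact G.irrefl h3
    · exact G'.irrefl h3
    · simp_all
    · simp_all

/-- The class of `n`-dimensional hypercube-like networks (HL-networks):
`HL 1 = {K₂}`, and the members of `HL (n+1)` are exactly the graphs obtained by
joining two members of `HL n` by a perfect matching. -/
inductive IsHL : (n : ℕ) → SimpleGraph (HLV n) → Prop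
  | base : IsHL 1 ⊤
  | step {n : ℕ} {G G' : SimpleGraph (HLV n)} (f : HLV n ≃ HLV n) :
      IsHL n G → IsHL n G' → IsHL (n + 1) (matchingJoin G G' f)

/-! ### popcount and its partial sums -/

def sb : ℕ → ℕ
  | 0 => 0
  | (n+1) => sb ((n+1)/2) + (n+1) % 2
decreasing_by exact Nat.div_lt_self (Nat.succ_pos n) one_lt_two

lemma sb_zero : sb 0 = 0 := by simp [sb]

lemma sb_two_mul (x : ℕ) : sb (2*x) = sb x := by
  cases x with
  | zero => rfl
  | succ m =>
    show sb (2*m+2) = sb (m+1)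
    rw [show 2*m+2 = (2*m+1)+1 by ring, sb]
    have h1 : (2*m+1+1)/2 = m+1 := by omega
    have h2 : (2*m+1+1) % 2 = 0 := by omega
    rw [h1, h2]
    omega

lemma sb_two_mul_add_one (x : ℕ) : sb (2*x+1) = sb x + 1 := by
  rw [show 2*x+1 = (2*x)+1 from rfl, sb]
  have h1 : (2*x+1)/2 = x := by omega
  have h2 : (2*x+1) % 2 = 1 := by omega
  rw [h1, h2]

def fc (n : ℕ) : ℕ := ∑ i ∈ Finset.range n, sb i

lemma fc_zero : fc 0 = 0 := rfl

lemma fc_succ (n : ℕ) : fc (n+1) = fc n + sb n := Finset.sum_range_succ _ _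

lemma fc_two_mul (x : ℕ) : fc (2*x) = 2 * fc x + x := by
  induction x with
  | zero => rfl
  | succ m ih =>
    have : 2*(m+1) = (2*m+1)+1 := by ring
    rw [this, fc_succ, show 2*m+1 = (2*m)+1 from rfl, fc_succ, ih,
      sb_two_mul, sb_two_mul_add_one, fc_succ]
    ring

lemma fc_two_mul_add_one (x : ℕ) : fc (2*x+1) = 2 * fc x + x + sb x := by
  rw [fc_succ, fc_two_mul, sb_two_mul]

/-! ### superadditivity -/

lemma fc_superadd_aux : ∀ N, ∀ a b : ℕ, a + b ≤ N → a ≤ b →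
    fc a + fc b + a ≤ fc (a + b) := by
  intro N
  induction N with
  | zero =>
    intro a b h _
    have h1 : a = 0 := by omega
    have h2 : b = 0 := by omega
    subst h1; subst h2; simp [fc_zero]
  | succ N IH =>
    intro a b hab hle
    have IH' : ∀ a b : ℕ, a + b ≤ N → fc a + fc b + min a b ≤ fc (a + b) := by
      intro a b h
      rcases le_total a b with h'|h'
      · rw [min_eq_left h']; exact IH a b h h'
      · rw [min_eq_right h', add_comm a b]
        have := IH b a (by omega) h'
        linarith
    rcases Nat.eq_zero_or_pos a with rfl|ha
    · simp [fc_zero]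
    rcases Nat.even_or_odd a with ⟨x, hx⟩|⟨x, hx⟩ <;>
      rcases Nat.even_or_odd b with ⟨y, hy⟩|⟨y, hy⟩
    · -- a = 2x, b = 2y
      subst hx hy
      have e1 : fc (x+x) = 2 * fc x + x := by rw [show x+x = 2*x by ring, fc_two_mul]
      have e2 : fc (y+y) = 2 * fc y + y := by rw [show y+y = 2*y by ring, fc_two_mul]
      have e3 : fc (x+x+(y+y)) = 2 * fc (x+y) + (x+y) := by
        rw [show x+x+(y+y) = 2*(x+y) by ring, fc_two_mul]
      have h4 := IH' x y (by omega)
      omega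
    · -- a = 2x, b = 2y+1
      subst hx hy
      have e1 : fc (x+x) = 2 * fc x + x := by rw [show x+x = 2*x by ring, fc_two_mul]
      have e2 : fc (2*y+1) = 2 * fc y + y + sb y := fc_two_mul_add_one y
      have e3 : fc (x+x+(2*y+1)) = 2 * fc (x+y) + (x+y) + sb (x+y) := by
        rw [show x+x+(2*y+1) = 2*(x+y)+1 by ring, fc_two_mul_add_one]
      have h4 := IH' x y (by omega)
      have h5 := IH' x (y+1) (by omega)
      have e6 : fc (y+1) = fc y + sb y := fc_succ y
      have e7 : fc (x+(y+1)) = fc (x+y) + sb (x+y) := by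
        rw [show x+(y+1) = (x+y)+1 by ring, fc_succ]
      omega
    · -- a = 2x+1, b = 2y
      subst hx hy
      have e1 : fc (2*x+1) = 2 * fc x + x + sb x := fc_two_mul_add_one x
      have e2 : fc (y+y) = 2 * fc y + y := by rw [show y+y = 2*y by ring, fc_two_mul]
      have e3 : fc (2*x+1+(y+y)) = 2 * fc (x+y) + (x+y) + sb (x+y) := by
        rw [show 2*x+1+(y+y) = 2*(x+y)+1 by ring, fc_two_mul_add_one]
      have h4 := IH' x y (by omega)
      have h5 := IH' (x+1) y (by omega)
      have e6 : fc (x+1) = fc x + sb x := fc_succ x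
      have e7 : fc (x+1+y) = fc (x+y) + sb (x+y) := by
        rw [show x+1+y = (x+y)+1 by ring, fc_succ]
      omega
    · -- a = 2x+1, b = 2y+1
      subst hx hy
      have e1 : fc (2*x+1) = 2 * fc x + x + sb x := fc_two_mul_add_one x
      have e2 : fc (2*y+1) = 2 * fc y + y + sb y := fc_two_mul_add_one y
      have e3 : fc (2*x+1+(2*y+1)) = 2 * fc (x+y+1) + (x+y+1) := by
        rw [show 2*x+1+(2*y+1) = 2*(x+y+1) by ring, fc_two_mul]
      have h4 := IH' x (y+1) (by omega)
      have h5 := IH' (x+1) y (by omega)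
      have e6 : fc (x+1) = fc x + sb x := fc_succ x
      have e6' : fc (y+1) = fc y + sb y := fc_succ y
      have e7 : fc (x+(y+1)) = fc (x+y+1) := by ring_nf
      have e8 : fc (x+1+y) = fc (x+y+1) := by ring_nf
      omega

lemma fc_superadd (a b : ℕ) : fc a + fc b + min a b ≤ fc (a + b) := by
  rcases le_total a b with h|h
  · simpa [min_eq_left h] using fc_superadd_aux (a+b) a b le_rfl h
  · have := fc_superadd_aux (a+b) b a (by omega) h
    rw [min_eq_right h, add_comm a b]
    linarith

/-! ### the power-of-two identities -/

lemma sb_pow_add : ∀ t i : ℕ, i < 2^t → sb (2^t + i) = sb i + 1 := by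
  intro t
  induction t with
  | zero =>
    intro i hi
    interval_cases i
    simpa using sb_two_mul_add_one 0
  | succ t IH =>
    intro i hi
    rcases Nat.even_or_odd i with ⟨j, hj⟩|⟨j, hj⟩
    · have hj' : j < 2^t := by subst hj; rw [pow_succ] at hi; omega
      have : 2^(t+1) + i = 2*(2^t + j) := by subst hj; rw [pow_succ]; ring
      rw [this, sb_two_mul, IH j hj', hj, show j+j = 2*j by ring, sb_two_mul]
    · have hj' : j < 2^t := by subst hj; rw [pow_succ] at hi; omega
      have : 2^(t+1) + i = 2*(2^t + j) + 1 := by subst hj; rw [pow_succ]; ring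
      rw [this, sb_two_mul_add_one, IH j hj', hj, sb_two_mul_add_one]

lemma fc_pow_add : ∀ t r : ℕ, r ≤ 2^t → fc (2^t + r) = fc (2^t) + r + fc r := by
  intro t r
  induction r with
  | zero => intro _; simp [fc_zero]
  | succ r IH =>
    intro hr
    rw [show 2^t + (r+1) = (2^t+r)+1 by ring, fc_succ, IH (by omega),
      sb_pow_add t r (by omega), fc_succ]
    ring

lemma fc_pow (t : ℕ) : fc (2^t) = t * 2^(t-1) := by
  induction t with
  | zero => simp [fc, sb_zero]
  | succ t IH =>
    rw [pow_succ, mul_comm (2^t) 2, fc_two_mul, IH]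
    cases t with
    | zero => simp [fc_succ, fc_zero, sb_zero]
    | succ s =>
      simp only [Nat.add_sub_cancel]
      rw [pow_succ]
      ring

lemma mem_bitIndices : ∀ (n k : ℕ), k ∈ n.bitIndices ↔ n.testBit k = true := by
  intro n
  induction n using Nat.strong_induction_on with
  | _ n IH =>
    intro k
    rcases Nat.eq_zero_or_pos n with rfl|hn
    · simp
    rcases Nat.even_or_odd n with ⟨m,hm⟩|⟨m,hm⟩
    · have hmn : m < n := by omega
      have he : n = 2*m := by omega
      rw [he, Nat.bitIndices_two_mul]
      cases k with
      | zero =>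
        simp only [List.mem_map, Nat.testBit_zero]
        constructor
        · rintro ⟨a, _, ha⟩; omega
        · intro h; exfalso; simp only [decide_eq_true_eq] at h; omega
      | succ k =>
        simp only [List.mem_map, Nat.testBit_add_one]
        rw [Nat.mul_div_cancel_left m (by norm_num : 0 < 2)]
        rw [← IH m hmn k]
        constructor
        · rintro ⟨a, ha, h⟩; have : a = k := by omega
          subst this; exact ha
        · intro h; exact ⟨k, h, rfl⟩
    · have hmn : m < n := by omega
      rw [hm, Nat.bitIndices_two_mul_add_one]
      cases k with
      | zero =>
        simp only [List.mem_cons, List.mem_map, Nat.testBit_zero, decide_eq_true_eq]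
        constructor
        · intro _; omega
        · intro _; exact Or.inl trivial
      | succ k =>
        simp only [List.mem_cons, List.mem_map, Nat.testBit_add_one]
        have hd : (2*m+1)/2 = m := by omega
        rw [hd, ← IH m hmn k]
        constructor
        · rintro (h | ⟨a, ha, h⟩)
          · exact absurd h (by omega)
          · have : a = k := by omega
            subst this; exact ha
        · intro h; exact Or.inr ⟨k, h, rfl⟩

lemma sort_filter_eq_bitIndices (g : ℕ) :
    ((Finset.range (g+1)).filter (fun k => g.testBit k)).sort (· ≤ ·) = g.bitIndices := by
  apply List.Perm.eq_of_pairwise' (Finset.pairwise_sort _ _)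
    (Nat.bitIndices_sorted.pairwise.imp (fun h => le_of_lt h)) ?_
  apply List.perm_of_nodup_nodup_toFinset_eq (Finset.sort_nodup _ _)
    (Nat.bitIndices_sorted.nodup)
  rw [Finset.sort_toFinset]
  ext k
  simp only [Finset.mem_filter, Finset.mem_range, List.mem_toFinset, mem_bitIndices]
  constructor
  · rintro ⟨_, h⟩; exact h
  · intro h
    refine ⟨?_, h⟩
    have h1 : 2^k ≤ g := Nat.two_pow_le_of_mem_bitIndices ((mem_bitIndices g k).2 h)
    have h2 : k < 2^k := Nat.lt_two_pow_self
    omega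

lemma expList_eq_rev_bitIndices (g : ℕ) : expList g = g.bitIndices.reverse := by
  rw [expList, sort_filter_eq_bitIndices]

lemma bitIndices_pow_add (t r : ℕ) (hr : r < 2^t) :
    (2^t + r).bitIndices = r.bitIndices ++ [t] := by
  have hs : (r.bitIndices ++ [t]).Pairwise (· < ·) := by
    refine List.pairwise_append.2 ⟨Nat.bitIndices_sorted.pairwise, List.pairwise_singleton _ t, ?_⟩
    intro a ha b hb
    rw [List.mem_singleton] at hb
    have h1 : 2^a ≤ r := Nat.two_pow_le_of_mem_bitIndices ha
    have h2 : (2:ℕ)^a < 2^b := by rw [hb]; exact lt_of_le_of_lt h1 hr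
    exact (Nat.pow_lt_pow_iff_right (by norm_num : 1 < 2)).1 h2
  have h2 := Nat.bitIndices_twoPowsum hs.sortedLT
  rw [List.map_append, List.sum_append] at h2
  simp only [List.map_singleton, List.sum_singleton, Nat.twoPowSum_bitIndices] at h2
  rw [show 2^t + r = r + 2^t by ring, h2]

lemma expList_pow_add (t r : ℕ) (hr : r < 2^t) :
    expList (2^t + r) = t :: expList r := by
  rw [expList_eq_rev_bitIndices, expList_eq_rev_bitIndices, bitIndices_pow_add t r hr,
    List.reverse_append]
  simp

lemma expList_zero : expList 0 = [] := by
  rw [expList_eq_rev_bitIndices]; simp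

lemma sum_pow_expList (g : ℕ) : ((expList g).map (fun x => 2^x)).sum = g := by
  rw [expList_eq_rev_bitIndices, List.map_reverse, List.sum_reverse,
    Nat.twoPowSum_bitIndices]

lemma enum_sum : ∀ (l : List ℕ) (k : ℕ),
    ((List.zipIdx l k).map (fun p => p.1 * 2^(p.1-1) + p.2 * 2^p.1)).sum
      = ((List.zipIdx l 0).map (fun p => p.1 * 2^(p.1-1) + p.2 * 2^p.1)).sum
        + k * ((l.map (fun x => 2^x)).sum) := by
  intro l
  induction l with
  | nil => simp
  | cons a tl IH =>
    intro k
    simp only [List.zipIdx_cons, List.map_cons, List.sum_cons]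
    rw [IH (k+1), IH (0+1)]
    ring

lemma eHL_zero : eHL 0 = 0 := by rw [eHL, expList_zero]; rfl

lemma eHL_pow_add (t r : ℕ) (hr : r < 2^t) :
    eHL (2^t + r) = t * 2^(t-1) + (eHL r + r) := by
  rw [eHL, expList_pow_add t r hr]
  rw [show (t :: expList r).zipIdx = (t, 0) :: List.zipIdx (expList r) 1 from rfl,
    List.map_cons, List.sum_cons, enum_sum (expList r) 1, sum_pow_expList]
  have : eHL r = ((List.zipIdx (expList r) 0).map
      (fun p => p.1 * 2 ^ (p.1 - 1) + p.2 * 2 ^ p.1)).sum := rfl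
  rw [← this]
  ring

set_option linter.unusedSectionVars false

open Set

/-- edges of `H` with both endpoints in `X`, as a set of edges of the ambient graph -/
def ES {W : Type} (H : SimpleGraph W) (X : Set W) : Set (Sym2 W) :=
  {e | e ∈ H.edgeSet ∧ ∀ v ∈ e, v ∈ X}

lemma induce_edge_ncard {W : Type} (H : SimpleGraph W) (X : Set W) :
    (H.induce X).edgeSet.ncard = (ES H X).ncard := by
  rw [← Set.ncard_image_of_injective _ (Sym2.map.injective (Subtype.val_injective (p := (· ∈ X))))]
  congr 1
  ext e
  constructor
  · rintro ⟨e', he', rfl⟩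
    induction e' using Sym2.ind with
    | _ a b =>
      rw [SimpleGraph.mem_edgeSet] at he'
      rw [Sym2.map_pair_eq]
      refine ⟨(SimpleGraph.mem_edgeSet _).2 he', ?_⟩
      intro v hv
      rcases Sym2.mem_iff.1 hv with rfl|rfl
      · exact a.2
      · exact b.2
  · intro he
    induction e using Sym2.ind with
    | _ x y =>
      obtain ⟨hadj, hmem⟩ := he
      have hx : x ∈ X := hmem x (Sym2.mem_mk_left x y)
      have hy : y ∈ X := hmem y (Sym2.mem_mk_right x y)
      refine ⟨s(⟨x, hx⟩, ⟨y, hy⟩), ?_, ?_⟩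
      · exact (SimpleGraph.mem_edgeSet _).2 ((SimpleGraph.mem_edgeSet _).1 hadj)
      · rw [Sym2.map_pair_eq]

variable {V : Type} [Fintype V]

lemma mk_false_inj : Function.Injective (Prod.mk false : V → Bool × V) := by
  intro a b h; exact (Prod.ext_iff.1 h).2

lemma mk_true_inj : Function.Injective (Prod.mk true : V → Bool × V) := by
  intro a b h; exact (Prod.ext_iff.1 h).2

lemma ES_join_eq (G G' : SimpleGraph V) (f : V ≃ V) (X : Set (Bool × V)) :
    ES (matchingJoin G G' f) X
      = (Sym2.map (Prod.mk false) '' ES G {v | (false,v) ∈ X})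
        ∪ (Sym2.map (Prod.mk true) '' ES G' {v | (true,v) ∈ X})
        ∪ ((fun v => s((false,v),(true, f v))) '' {v | (false,v) ∈ X ∧ (true, f v) ∈ X}) := by
  apply Set.Subset.antisymm
  · intro e he
    obtain ⟨hadj, hmem⟩ := he
    induction e using Sym2.ind with
    | _ p q =>
      rw [SimpleGraph.mem_edgeSet] at hadj
      obtain ⟨bp, up⟩ := p
      obtain ⟨bq, uq⟩ := q
      have hp : (bp, up) ∈ X := hmem _ (Sym2.mem_mk_left _ _)
      have hq : (bq, uq) ∈ X := hmem _ (Sym2.mem_mk_right _ _)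
      rcases hadj with ⟨h1, h2, h3⟩|⟨h1, h2, h3⟩|⟨h1, h2, h3⟩|⟨h1, h2, h3⟩ <;>
        dsimp only at h1 h2 h3 <;> subst h1 <;> subst h2
      · left; left
        refine ⟨s(up, uq), ⟨(SimpleGraph.mem_edgeSet _).2 h3, ?_⟩, by rw [Sym2.map_pair_eq]⟩
        intro v hv
        rcases Sym2.mem_iff.1 hv with rfl|rfl
        · exact hp
        · exact hq
      · left; right
        refine ⟨s(up, uq), ⟨(SimpleGraph.mem_edgeSet _).2 h3, ?_⟩, by rw [Sym2.map_pair_eq]⟩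
        intro v hv
        rcases Sym2.mem_iff.1 hv with rfl|rfl
        · exact hp
        · exact hq
      · right
        subst h3
        exact ⟨up, ⟨hp, hq⟩, rfl⟩
      · right
        subst h3
        exact ⟨uq, ⟨hq, hp⟩, Sym2.eq_swap⟩
  · intro e he
    rcases he with (⟨e', ⟨hadj, hmem⟩, rfl⟩ | ⟨e', ⟨hadj, hmem⟩, rfl⟩) | ⟨v, ⟨hv1, hv2⟩, rfl⟩
    · induction e' using Sym2.ind with
      | _ a b =>
        rw [Sym2.map_pair_eq]
        constructor
        · exact (SimpleGraph.mem_edgeSet _).2 (Or.inl ⟨rfl, rfl, (SimpleGraph.mem_edgeSet _).1 hadj⟩)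
        · intro v hv
          rcases Sym2.mem_iff.1 hv with rfl|rfl
          · exact hmem a (Sym2.mem_mk_left a b)
          · exact hmem b (Sym2.mem_mk_right a b)
    · induction e' using Sym2.ind with
      | _ a b =>
        rw [Sym2.map_pair_eq]
        constructor
        · exact (SimpleGraph.mem_edgeSet _).2 (Or.inr (Or.inl ⟨rfl, rfl, (SimpleGraph.mem_edgeSet _).1 hadj⟩))
        · intro v hv
          rcases Sym2.mem_iff.1 hv with rfl|rfl
          · exact hmem a (Sym2.mem_mk_left a b)
          · exact hmem b (Sym2.mem_mk_right a b)
    · constructor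
      · exact (SimpleGraph.mem_edgeSet _).2 (Or.inr (Or.inr (Or.inl ⟨rfl, rfl, rfl⟩)))
      · intro w hw
        rcases Sym2.mem_iff.1 hw with rfl|rfl
        · exact hv1
        · exact hv2

lemma join_induce_ncard (G G' : SimpleGraph V) (f : V ≃ V) (X : Set (Bool × V)) :
    ((matchingJoin G G' f).induce X).edgeSet.ncard
      = (G.induce {v | (false,v) ∈ X}).edgeSet.ncard
        + (G'.induce {v | (true,v) ∈ X}).edgeSet.ncard
        + {v | (false,v) ∈ X ∧ (true, f v) ∈ X}.ncard := by
  rw [induce_edge_ncard, induce_edge_ncard, induce_edge_ncard, ES_join_eq]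
  have hAfalse : ∀ e ∈ Sym2.map (Prod.mk false) '' ES G {v | (false,v) ∈ X},
      ∀ w ∈ e, (w : Bool × V).1 = false := by
    rintro e ⟨e', _, rfl⟩ w hw
    rcases Sym2.mem_map.1 hw with ⟨a, _, rfl⟩
    rfl
  have hBtrue : ∀ e ∈ Sym2.map (Prod.mk true) '' ES G' {v | (true,v) ∈ X},
      ∀ w ∈ e, (w : Bool × V).1 = true := by
    rintro e ⟨e', _, rfl⟩ w hw
    rcases Sym2.mem_map.1 hw with ⟨a, _, rfl⟩
    rfl
  have hd1 : Disjoint (Sym2.map (Prod.mk false) '' ES G {v | (false,v) ∈ X})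
      (Sym2.map (Prod.mk true) '' ES G' {v | (true,v) ∈ X}) := by
    rw [Set.disjoint_left]
    intro e heA heB
    induction e using Sym2.ind with
    | _ p q =>
      have h1 := hAfalse _ heA p (Sym2.mem_mk_left p q)
      have h2 := hBtrue _ heB p (Sym2.mem_mk_left p q)
      rw [h1] at h2; exact Bool.false_ne_true h2
  have hd2 : Disjoint
      ((Sym2.map (Prod.mk false) '' ES G {v | (false,v) ∈ X})
        ∪ (Sym2.map (Prod.mk true) '' ES G' {v | (true,v) ∈ X}))
      ((fun v => s((false,v),(true, f v))) '' {v | (false,v) ∈ X ∧ (true, f v) ∈ X}) := by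
    rw [Set.disjoint_left]
    rintro e heAB ⟨v, _, rfl⟩
    rcases heAB with heA | heB
    · have := hAfalse _ heA (true, f v) (Sym2.mem_mk_right _ _)
      exact Bool.false_ne_true this.symm
    · have := hBtrue _ heB (false, v) (Sym2.mem_mk_left _ _)
      exact Bool.false_ne_true (by exact this)
  rw [Set.ncard_union_eq hd2 (Set.toFinite _) (Set.toFinite _),
    Set.ncard_union_eq hd1 (Set.toFinite _) (Set.toFinite _),
    Set.ncard_image_of_injective _ (Sym2.map.injective mk_false_inj),
    Set.ncard_image_of_injective _ (Sym2.map.injective mk_true_inj),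
    Set.ncard_image_of_injective _ (?_ : Function.Injective fun v => s((false,v),(true, f v)))]
  intro a b h
  rcases Sym2.eq_iff.1 h with ⟨h1, _⟩|⟨h1, _⟩
  · exact (Prod.ext_iff.1 h1).2
  · exact absurd (Prod.ext_iff.1 h1).1 Bool.false_ne_true

lemma ncard_split (X : Set (Bool × V)) :
    X.ncard = {v | (false,v) ∈ X}.ncard + {v | (true,v) ∈ X}.ncard := by
  have hX : X = (Prod.mk false '' {v | (false,v) ∈ X}) ∪ (Prod.mk true '' {v | (true,v) ∈ X}) := by
    ext ⟨b, v⟩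
    cases b <;> simp
  have hd : Disjoint (Prod.mk false '' {v | (false,v) ∈ X}) (Prod.mk true '' {v | (true,v) ∈ X}) := by
    rw [Set.disjoint_left]
    rintro e ⟨a, _, rfl⟩ ⟨b, _, h⟩
    exact absurd (Prod.ext_iff.1 h).1 (fun hh => Bool.false_ne_true hh.symm)
  nth_rewrite 1 [hX]
  rw [Set.ncard_union_eq hd (Set.toFinite _) (Set.toFinite _),
    Set.ncard_image_of_injective _ mk_false_inj, Set.ncard_image_of_injective _ mk_true_inj]


/-! ### eHL = fc -/

lemma eHL_eq_fc : ∀ g, eHL g = fc g := by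
  intro g
  induction g using Nat.strong_induction_on with
  | _ g IH =>
    rcases Nat.eq_zero_or_pos g with rfl|hg
    · rw [eHL_zero, fc_zero]
    · have hne : g ≠ 0 := by omega
      have h1 : 2 ^ Nat.log2 g ≤ g := Nat.log2_self_le hne
      have h2 : g < 2 ^ (Nat.log2 g + 1) := Nat.lt_log2_self
      have h2' : g < 2 * 2 ^ Nat.log2 g := by
        rw [pow_succ] at h2; omega
      have hg' : g = 2 ^ Nat.log2 g + (g - 2 ^ Nat.log2 g) := by omega
      have hr : g - 2 ^ Nat.log2 g < 2 ^ Nat.log2 g := by omega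
      have hpos : 0 < 2 ^ Nat.log2 g := Nat.pow_pos (by norm_num)
      rw [hg', eHL_pow_add _ _ hr, fc_pow_add _ _ (le_of_lt hr), fc_pow,
        IH (g - 2 ^ Nat.log2 g) (by omega)]
      ring

lemma eHL_one : eHL 1 = 0 := by
  rw [eHL_eq_fc, show (1:ℕ) = 0 + 1 from rfl, fc_succ, fc_zero, sb_zero]

lemma eHL_two : eHL 2 = 1 := by
  rw [eHL_eq_fc, show (2:ℕ) = 1 + 1 from rfl, fc_succ, show (1:ℕ) = 2*0+1 from rfl,
    fc_two_mul_add_one, sb_two_mul_add_one, fc_zero, sb_zero]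

/-! ### small graph counting lemmas -/

lemma ES_empty {W : Type} (H : SimpleGraph W) : ES H (∅ : Set W) = ∅ := by
  ext e
  induction e using Sym2.ind with
  | _ x y =>
    simp only [Set.mem_empty_iff_false, iff_false]
    rintro ⟨_, hm⟩
    exact hm x (Sym2.mem_mk_left x y)

lemma ES_singleton {W : Type} (H : SimpleGraph W) (a : W) : ES H {a} = ∅ := by
  ext e
  induction e using Sym2.ind with
  | _ x y =>
    simp only [Set.mem_empty_iff_false, iff_false]
    rintro ⟨hadj, hm⟩
    have hx : x = a := hm x (Sym2.mem_mk_left x y)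
    have hy : y = a := hm y (Sym2.mem_mk_right x y)
    rw [hx, hy] at hadj
    exact H.irrefl ((SimpleGraph.mem_edgeSet _).1 hadj)

lemma induce_empty_ncard {W : Type} (H : SimpleGraph W) :
    (H.induce (∅ : Set W)).edgeSet.ncard = 0 := by
  rw [induce_edge_ncard, ES_empty, Set.ncard_empty]

lemma induce_singleton_ncard {W : Type} (H : SimpleGraph W) (a : W) :
    (H.induce ({a} : Set W)).edgeSet.ncard = 0 := by
  rw [induce_edge_ncard, ES_singleton, Set.ncard_empty]

lemma card_HLV : ∀ n, Fintype.card (HLV n) = 2^n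
  | 0 => rfl
  | n + 1 => by
    have ih := card_HLV n
    show Fintype.card (Bool × HLV n) = 2^(n+1)
    rw [Fintype.card_prod, Fintype.card_bool, ih, pow_succ]
    ring

/-! ### the base case -/

lemma edgeSet_top_two :
    (⊤ : SimpleGraph (Bool × Unit)).edgeSet = {s(((false,()) : Bool × Unit), (true,()))} := by
  ext e
  induction e using Sym2.ind with
  | _ p q =>
    rw [SimpleGraph.mem_edgeSet, SimpleGraph.top_adj, Set.mem_singleton_iff, Sym2.eq_iff]
    revert p q
    decide

lemma base_case (g : ℕ) :
    (∀ X : Set (Bool × Unit), X.ncard = g →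
      (((⊤ : SimpleGraph (Bool × Unit))).induce X).edgeSet.ncard ≤ eHL g) ∧
    (g ≤ 2 ^ 1 → ∃ X : Set (Bool × Unit), X.ncard = g ∧
      (((⊤ : SimpleGraph (Bool × Unit))).induce X).edgeSet.ncard = eHL g) := by
  have hcard : (Set.univ : Set (Bool × Unit)).ncard = 2 := by
    rw [Set.ncard_univ, Nat.card_eq_fintype_card]
    simp
  have hbound : ∀ X : Set (Bool × Unit),
      (((⊤ : SimpleGraph (Bool × Unit))).induce X).edgeSet.ncard ≤ 1 := by
    intro X
    rw [induce_edge_ncard]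
    have h1 : ES ⊤ X ⊆ (⊤ : SimpleGraph (Bool × Unit)).edgeSet := fun e he => he.1
    calc (ES ⊤ X).ncard ≤ ((⊤ : SimpleGraph (Bool × Unit)).edgeSet).ncard :=
          Set.ncard_le_ncard h1 (Set.toFinite _)
      _ = 1 := by rw [edgeSet_top_two, Set.ncard_singleton]
  constructor
  · intro X hX
    match g, hX with
    | 0, hX =>
      have : X = ∅ := by
        rw [← Set.ncard_eq_zero (Set.toFinite X)]; exact hX
      subst this
      rw [induce_empty_ncard, eHL_zero]
    | 1, hX =>
      obtain ⟨a, rfl⟩ := Set.ncard_eq_one.1 hX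
      rw [induce_singleton_ncard, eHL_one]
    | 2, hX => rw [eHL_two]; exact hbound X
    | (m+3), hX =>
      exfalso
      have h2 := Set.ncard_le_ncard (Set.subset_univ X) (Set.toFinite _)
      rw [hcard, hX] at h2
      omega
  · intro hg
    match g, hg with
    | 0, _ =>
      exact ⟨∅, Set.ncard_empty _, by rw [induce_empty_ncard, eHL_zero]⟩
    | 1, _ =>
      exact ⟨{(false,())}, Set.ncard_singleton _,
        by rw [induce_singleton_ncard, eHL_one]⟩
    | 2, _ =>
      refine ⟨Set.univ, hcard, ?_⟩
      rw [induce_edge_ncard, eHL_two]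
      have : ES (⊤ : SimpleGraph (Bool × Unit)) Set.univ
          = (⊤ : SimpleGraph (Bool × Unit)).edgeSet := by
        ext e
        exact ⟨fun he => he.1, fun he => ⟨he, fun v _ => Set.mem_univ v⟩⟩
      rw [this, edgeSet_top_two, Set.ncard_singleton]

/-- In any `n`-dimensional HL-network, any set of `g` vertices induces at most
`e g` edges, and (whenever `g ≤ 2^n`) some set of `g` vertices attains this bound. -/
theorem isHL_induced_max_edges (n g : ℕ) (G : SimpleGraph (HLV n)) (hG : IsHL n G) :
    (∀ X : Set (HLV n), X.ncard = g → (G.induce X).edgeSet.ncard ≤ eHL g) ∧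
    (g ≤ 2 ^ n → ∃ X : Set (HLV n), X.ncard = g ∧ (G.induce X).edgeSet.ncard = eHL g) := by
  induction hG generalizing g with
  | base => exact base_case g
  | @step n G G' f hG hG' IH IH' =>
    show (∀ X : Set (Bool × HLV n), X.ncard = g →
        ((matchingJoin G G' f).induce X).edgeSet.ncard ≤ eHL g) ∧
      (g ≤ 2 ^ (n+1) → ∃ X : Set (Bool × HLV n), X.ncard = g ∧
        ((matchingJoin G G' f).induce X).edgeSet.ncard = eHL g)
    constructor
    · intro X hX
      have hdec := join_induce_ncard (V := HLV n) G G' f X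
      have h0 := (IH ({v | ((false,v) : Bool × HLV n) ∈ X}.ncard)).1 _ rfl
      have h1 := (IH' ({v | ((true,v) : Bool × HLV n) ∈ X}.ncard)).1 _ rfl
      have hsplit := ncard_split (V := HLV n) X
      have hM0 : {v | ((false,v) : Bool × HLV n) ∈ X ∧ ((true, f v) : Bool × HLV n) ∈ X}.ncard
          ≤ {v | ((false,v) : Bool × HLV n) ∈ X}.ncard :=
        Set.ncard_le_ncard (fun v hv => hv.1) (Set.toFinite _)
      have hM1 : {v | ((false,v) : Bool × HLV n) ∈ X ∧ ((true, f v) : Bool × HLV n) ∈ X}.ncard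
          ≤ {v | ((true,v) : Bool × HLV n) ∈ X}.ncard := by
        have himg : f '' {v | ((false,v) : Bool × HLV n) ∈ X ∧ ((true, f v) : Bool × HLV n) ∈ X}
            ⊆ {v | ((true,v) : Bool × HLV n) ∈ X} := by
          rintro _ ⟨v, hv, rfl⟩
          exact hv.2
        calc {v | ((false,v) : Bool × HLV n) ∈ X ∧ ((true, f v) : Bool × HLV n) ∈ X}.ncard
            = (f '' {v | ((false,v) : Bool × HLV n) ∈ X
                ∧ ((true, f v) : Bool × HLV n) ∈ X}).ncard :=
              (Set.ncard_image_of_injective _ f.injective).symm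
          _ ≤ _ := Set.ncard_le_ncard himg (Set.toFinite _)
      have hsuper := fc_superadd {v | ((false,v) : Bool × HLV n) ∈ X}.ncard
        {v | ((true,v) : Bool × HLV n) ∈ X}.ncard
      rw [eHL_eq_fc] at h0 h1 ⊢
      rw [hdec, show g = {v | ((false,v) : Bool × HLV n) ∈ X}.ncard
        + {v | ((true,v) : Bool × HLV n) ∈ X}.ncard from by omega]
      omega
    · intro hg
      rcases le_or_gt g (2^n) with hle|hlt
      · obtain ⟨X0, hc, hedge⟩ := (IH g).2 hle
        refine ⟨Prod.mk false '' X0, ?_, ?_⟩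
        · rw [Set.ncard_image_of_injective _ mk_false_inj, hc]
        · have hdec := join_induce_ncard (V := HLV n) G G' f (Prod.mk false '' X0)
          have e0 : {v | ((false,v) : Bool × HLV n) ∈ Prod.mk false '' X0} = X0 := by
            ext v; simp
          have e1 : {v | ((true,v) : Bool × HLV n) ∈ Prod.mk false '' X0} = (∅ : Set (HLV n)) := by
            ext v; simp
          have e2 : {v | ((false,v) : Bool × HLV n) ∈ Prod.mk false '' X0
              ∧ ((true, f v) : Bool × HLV n) ∈ Prod.mk false '' X0} = (∅ : Set (HLV n)) := by
            ext v; simp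
          rw [hdec, e0, e1, e2, hedge, induce_empty_ncard, Set.ncard_empty]
          omega
      · have h2n : 2^(n+1) = 2 * 2^n := by rw [pow_succ]; ring
        have hb : g - 2^n ≤ 2^n := by omega
        obtain ⟨X0, hc0, he0⟩ := (IH (2^n)).2 le_rfl
        have hX0univ : X0 = Set.univ := by
          apply Set.eq_of_subset_of_ncard_le (Set.subset_univ _) _ (Set.toFinite _)
          rw [Set.ncard_univ, Nat.card_eq_fintype_card, card_HLV, hc0]
        subst hX0univ
        obtain ⟨X1, hc1, he1⟩ := (IH' (g - 2^n)).2 hb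
        have hdisj : Disjoint (Prod.mk false '' (Set.univ : Set (HLV n)))
            (Prod.mk true '' X1) := by
          rw [Set.disjoint_left]
          rintro e ⟨a, _, rfl⟩ ⟨b, _, h⟩
          exact absurd (Prod.ext_iff.1 h).1 (fun hh => Bool.false_ne_true hh.symm)
        refine ⟨(Prod.mk false '' (Set.univ : Set (HLV n))) ∪ (Prod.mk true '' X1), ?_, ?_⟩
        · rw [Set.ncard_union_eq hdisj (Set.toFinite _) (Set.toFinite _),
            Set.ncard_image_of_injective _ mk_false_inj,
            Set.ncard_image_of_injective _ mk_true_inj,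
            Set.ncard_univ, Nat.card_eq_fintype_card, card_HLV, hc1]
          omega
        · set Y := (Prod.mk false '' (Set.univ : Set (HLV n))) ∪ (Prod.mk true '' X1) with hY
          have hdec := join_induce_ncard (V := HLV n) G G' f Y
          have e0 : {v | ((false,v) : Bool × HLV n) ∈ Y} = (Set.univ : Set (HLV n)) := by
            ext v; simp [hY]
          have e1 : {v | ((true,v) : Bool × HLV n) ∈ Y} = X1 := by
            ext v; simp [hY]
          have e2 : {v | ((false,v) : Bool × HLV n) ∈ Y ∧ ((true, f v) : Bool × HLV n) ∈ Y}
              = f.symm '' X1 := by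
            ext v
            simp only [Set.mem_setOf_eq, hY, Set.mem_union, Set.mem_image, Set.mem_univ]
            constructor
            · rintro ⟨-, (⟨a, -, ha⟩ | ⟨a, haX, ha⟩)⟩
              · exact absurd (congrArg Prod.fst ha) (by simp)
              · have : a = f v := (Prod.ext_iff.1 ha).2
                subst this
                exact ⟨f v, haX, Equiv.symm_apply_apply f v⟩
            · rintro ⟨a, haX, rfl⟩
              refine ⟨Or.inl ⟨f.symm a, trivial, rfl⟩, Or.inr ⟨a, haX, ?_⟩⟩
              rw [Equiv.apply_symm_apply]
          have hmcard : (f.symm '' X1).ncard = g - 2^n := by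
            rw [Set.ncard_image_of_injective _ f.symm.injective, hc1]
          have hfc : fc g = fc (2^n) + (g - 2^n) + fc (g - 2^n) := by
            conv_lhs => rw [show g = 2^n + (g - 2^n) from by omega]
            exact fc_pow_add n (g - 2^n) hb
          rw [hdec, e0, e1, e2, he0, he1, hmcard]
          rw [eHL_eq_fc, eHL_eq_fc, eHL_eq_fc]
          omega
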